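/- arXiv:1707.01061 — 4 statements merged into one kernel-verified Lean document; each statement's English description precedes it below -/
import Mathlib

section
/- Let {f_N : 1 ≤ N ≤ 2^m − 1} be a signed tree system on Q = [0,1]^n with the support and sign conditions holding everywhere, and let σ be the unique permutation of {1, …, 2^m − 1} with t_{σ(1)} < t_{σ(2)} < … < t_{σ(2^m−1)}. Then for every x ∈ ℝⁿ there exists an integer l with 0 ≤ l ≤ 2^m − 1 such that f_{σ(h)}(x) ≤ 0 for all 1 ≤ h ≤ l and f_{σ(h)}(x) ≥ 0 for all l < h ≤ 2^m − 1. -/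
open MeasureTheory Function

def unitCube (n : ℕ) : Set (EuclideanSpace ℝ (Fin n)) :=
  {x | ∀ i, x i ∈ Set.Icc (0:ℝ) 1}

noncomputable def treePointN (N : ℕ) : ℝ :=
  (2 * ((N : ℝ) - 2 ^ Nat.log 2 N + 1) - 1) / 2 ^ (Nat.log 2 N + 1)

private lemma treePointN_eq (N : ℕ) :
    treePointN N = (2 * N + 1 : ℝ) / 2 ^ (Nat.log 2 N + 1) - 1 := by
  unfold treePointN
  have h : (0:ℝ) < 2 ^ (Nat.log 2 N + 1) := by positivity
  field_simp
  ring

private lemma treePoint_bound {C M i : ℕ} (hC : 1 ≤ C) (h : M / 2 ^ i = C) :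
    (C : ℝ) / 2 ^ (Nat.log 2 C) < treePointN M + 1 ∧
      treePointN M + 1 < ((C : ℝ) + 1) / 2 ^ (Nat.log 2 C) := by
  have hpow : 0 < 2 ^ i := Nat.pow_pos (by norm_num)
  have hlow : C * 2 ^ i ≤ M := (Nat.le_div_iff_mul_le hpow).mp (le_of_eq h.symm)
  have hhigh : M < (C + 1) * 2 ^ i := (Nat.div_lt_iff_lt_mul hpow).mp (by omega)
  have hc1 : 2 ^ Nat.log 2 C ≤ C := Nat.pow_log_le_self 2 (by omega)
  have hc2 : C < 2 ^ (Nat.log 2 C + 1) := Nat.lt_pow_succ_log_self one_lt_two C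
  have hlog : Nat.log 2 M = Nat.log 2 C + i := by
    apply Nat.log_eq_of_pow_le_of_lt_pow
    · calc 2 ^ (Nat.log 2 C + i) = 2 ^ Nat.log 2 C * 2 ^ i := pow_add 2 _ _
        _ ≤ C * 2 ^ i := Nat.mul_le_mul_right _ hc1
        _ ≤ M := hlow
    · calc M < (C + 1) * 2 ^ i := hhigh
        _ ≤ 2 ^ (Nat.log 2 C + 1) * 2 ^ i := Nat.mul_le_mul_right _ (by omega)
        _ = 2 ^ (Nat.log 2 C + i + 1) := by rw [← pow_add]; ring_nf
  rw [treePointN_eq, hlog]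
  have e1 : (2:ℝ) ^ (Nat.log 2 C + i + 1) = 2 ^ Nat.log 2 C * 2 ^ i * 2 := by
    rw [pow_add, pow_add, pow_one]
  have hlowR : (C : ℝ) * 2 ^ i ≤ M := by exact_mod_cast hlow
  have hhighR : (M : ℝ) + 1 ≤ ((C:ℝ) + 1) * 2 ^ i := by exact_mod_cast hhigh
  have p1 : (0:ℝ) < 2 ^ Nat.log 2 C := by positivity
  have p2 : (0:ℝ) < 2 ^ i := by positivity
  have key1 : (C : ℝ) / 2 ^ Nat.log 2 C < (2 * M + 1) / 2 ^ (Nat.log 2 C + i + 1) := by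
    rw [div_lt_div_iff₀ p1 (by positivity), e1]
    nlinarith [mul_le_mul_of_nonneg_right hlowR p1.le]
  have key2 : (2 * (M:ℝ) + 1) / 2 ^ (Nat.log 2 C + i + 1) < ((C:ℝ) + 1) / 2 ^ Nat.log 2 C := by
    rw [div_lt_div_iff₀ (by positivity) p1, e1]
    nlinarith [mul_le_mul_of_nonneg_right hhighR p1.le]
  constructor
  · linarith
  · linarith

private lemma treePoint_left {K M i : ℕ} (hK : 1 ≤ K) (h : M / 2 ^ i = 2 * K) :
    treePointN M < treePointN K := by
  have hc1 : 2 ^ Nat.log 2 K ≤ K := Nat.pow_log_le_self 2 (by omega)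
  have hc2 : K < 2 ^ (Nat.log 2 K + 1) := Nat.lt_pow_succ_log_self one_lt_two K
  have e : 2 ^ (Nat.log 2 K + 1) = 2 ^ Nat.log 2 K * 2 := pow_succ 2 _
  have e2 : 2 ^ (Nat.log 2 K + 1 + 1) = 2 ^ (Nat.log 2 K + 1) * 2 := pow_succ 2 _
  have hlog : Nat.log 2 (2 * K) = Nat.log 2 K + 1 :=
    Nat.log_eq_of_pow_le_of_lt_pow (by omega) (by omega)
  have hb := (treePoint_bound (by omega : 1 ≤ 2 * K) h).2
  rw [hlog] at hb
  rw [treePointN_eq K]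
  push_cast at hb ⊢
  linarith

private lemma treePoint_right {K M i : ℕ} (hK : 1 ≤ K) (h : M / 2 ^ i = 2 * K + 1) :
    treePointN K < treePointN M := by
  have hc1 : 2 ^ Nat.log 2 K ≤ K := Nat.pow_log_le_self 2 (by omega)
  have hc2 : K < 2 ^ (Nat.log 2 K + 1) := Nat.lt_pow_succ_log_self one_lt_two K
  have e : 2 ^ (Nat.log 2 K + 1) = 2 ^ Nat.log 2 K * 2 := pow_succ 2 _
  have e2 : 2 ^ (Nat.log 2 K + 1 + 1) = 2 ^ (Nat.log 2 K + 1) * 2 := pow_succ 2 _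
  have hlog : Nat.log 2 (2 * K + 1) = Nat.log 2 K + 1 :=
    Nat.log_eq_of_pow_le_of_lt_pow (by omega) (by omega)
  have hb := (treePoint_bound (by omega : 1 ≤ 2 * K + 1) h).1
  rw [hlog] at hb
  rw [treePointN_eq K]
  push_cast at hb ⊢
  linarith

section Tree
variable {n m : ℕ} {f : ℕ → EuclideanSpace ℝ (Fin n) → ℝ} {x : EuclideanSpace ℝ (Fin n)}

private lemma parent_ne (hm : 1 ≤ m)
    (hsigned : ∀ N, 1 ≤ N → 2 * N + 1 ≤ 2 ^ m - 1 →
      support (f (2 * N)) ⊆ {y | y ∈ unitCube n ∧ 0 < f N y} ∧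
      support (f (2 * N + 1)) ⊆ {y | y ∈ unitCube n ∧ f N y < 0})
    {K : ℕ} (hK2 : 2 ≤ K) (hKR : K ≤ 2 ^ m - 1) (hne : f K x ≠ 0) :
    f (K / 2) x ≠ 0 := by
  have hpow1 : 2 ^ m = 2 * 2 ^ (m - 1) := by
    rw [← pow_succ']; congr 1; omega
  have hpow2 : 1 ≤ 2 ^ (m - 1) := Nat.one_le_two_pow
  obtain ⟨hL, hR⟩ := hsigned (K / 2) (by omega) (by omega)
  rcases (by omega : K = 2 * (K / 2) ∨ K = 2 * (K / 2) + 1) with hk | hk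
  · have hx : x ∈ support (f (2 * (K / 2))) := by rw [← hk]; exact hne
    exact ne_of_gt (hL hx).2
  · have hx : x ∈ support (f (2 * (K / 2) + 1)) := by rw [← hk]; exact hne
    exact ne_of_lt (hR hx).2

private lemma anc (hm : 1 ≤ m)
    (hsigned : ∀ N, 1 ≤ N → 2 * N + 1 ≤ 2 ^ m - 1 →
      support (f (2 * N)) ⊆ {y | y ∈ unitCube n ∧ 0 < f N y} ∧
      support (f (2 * N + 1)) ⊆ {y | y ∈ unitCube n ∧ f N y < 0})
    {K : ℕ} (hKR : K ≤ 2 ^ m - 1) (hne : f K x ≠ 0) :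
    ∀ i, 1 ≤ K / 2 ^ i → f (K / 2 ^ i) x ≠ 0 := by
  intro i
  induction i with
  | zero => intro _; simpa using hne
  | succ i ih =>
    intro hi
    have hdiv : K / 2 ^ (i + 1) = K / 2 ^ i / 2 := by
      rw [Nat.div_div_eq_div_mul, ← pow_succ]
    have h2 : 2 ≤ K / 2 ^ i := by
      rw [hdiv] at hi; omega
    have hle : K / 2 ^ i ≤ 2 ^ m - 1 := le_trans (Nat.div_le_self _ _) hKR
    rw [hdiv]
    exact parent_ne hm hsigned h2 hle (ih (by omega))

private lemma comp (hm : 1 ≤ m)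
    (hsigned : ∀ N, 1 ≤ N → 2 * N + 1 ≤ 2 ^ m - 1 →
      support (f (2 * N)) ⊆ {y | y ∈ unitCube n ∧ 0 < f N y} ∧
      support (f (2 * N + 1)) ⊆ {y | y ∈ unitCube n ∧ f N y < 0}) :
    ∀ s N M, N + M ≤ s → 1 ≤ N → N ≤ 2 ^ m - 1 → 1 ≤ M → M ≤ 2 ^ m - 1 →
      f N x ≠ 0 → f M x ≠ 0 → (∃ i, M / 2 ^ i = N) ∨ (∃ i, N / 2 ^ i = M) := by
  intro s
  induction s with
  | zero => intro N M h h1 _ h2 _ _ _; omega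
  | succ s ih =>
    intro N M hs hN1 hNR hM1 hMR hfN hfM
    rcases lt_trichotomy N M with hlt | heq | hgt
    · have hM2 : 2 ≤ M := by omega
      have hPR : M / 2 ≤ 2 ^ m - 1 := le_trans (Nat.div_le_self _ _) hMR
      have hfP : f (M / 2) x ≠ 0 := parent_ne hm hsigned hM2 hMR hfM
      rcases ih N (M / 2) (by omega) hN1 hNR (by omega) hPR hfN hfP with ⟨i, hi⟩ | ⟨i, hi⟩
      · left
        exact ⟨i + 1, by rw [pow_succ', ← Nat.div_div_eq_div_mul, hi]⟩
      · rcases i with _ | j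
        · simp only [pow_zero, Nat.div_one] at hi
          left; exact ⟨1, by rw [pow_one]; omega⟩
        · have hC : N / 2 ^ j / 2 = M / 2 := by
            rw [Nat.div_div_eq_div_mul, ← pow_succ]; exact hi
          have hC2 : 2 ≤ N / 2 ^ j := by omega
          have hfC : f (N / 2 ^ j) x ≠ 0 := anc hm hsigned hNR hfN j (by omega)
          by_cases hCM : N / 2 ^ j = M
          · right; exact ⟨j, hCM⟩
          · exfalso
            have hCle : N / 2 ^ j ≤ 2 ^ m - 1 := le_trans (Nat.div_le_self _ _) hNR
            obtain ⟨hL, hR⟩ := hsigned (M / 2) (by omega) (by omega)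
            rcases (by omega : (N / 2 ^ j = 2 * (M / 2) ∧ M = 2 * (M / 2) + 1) ∨
                (N / 2 ^ j = 2 * (M / 2) + 1 ∧ M = 2 * (M / 2))) with ⟨hc1, hc2⟩ | ⟨hc1, hc2⟩
            · have hx1 : x ∈ support (f (2 * (M / 2))) := by rw [← hc1]; exact hfC
              have hx2 : x ∈ support (f (2 * (M / 2) + 1)) := by rw [← hc2]; exact hfM
              linarith [(hL hx1).2, (hR hx2).2]
            · have hx1 : x ∈ support (f (2 * (M / 2) + 1)) := by rw [← hc1]; exact hfC
              have hx2 : x ∈ support (f (2 * (M / 2))) := by rw [← hc2]; exact hfM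
              linarith [(hL hx2).2, (hR hx1).2]
    · left; exact ⟨0, by simpa using heq.symm⟩
    · have hN2 : 2 ≤ N := by omega
      have hPR : N / 2 ≤ 2 ^ m - 1 := le_trans (Nat.div_le_self _ _) hNR
      have hfP : f (N / 2) x ≠ 0 := parent_ne hm hsigned hN2 hNR hfN
      rcases ih M (N / 2) (by omega) hM1 hMR (by omega) hPR hfM hfP with ⟨i, hi⟩ | ⟨i, hi⟩
      · right
        exact ⟨i + 1, by rw [pow_succ', ← Nat.div_div_eq_div_mul, hi]⟩
      · rcases i with _ | j
        · simp only [pow_zero, Nat.div_one] at hi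
          right; exact ⟨1, by rw [pow_one]; omega⟩
        · have hC : M / 2 ^ j / 2 = N / 2 := by
            rw [Nat.div_div_eq_div_mul, ← pow_succ]; exact hi
          have hC2 : 2 ≤ M / 2 ^ j := by omega
          have hfC : f (M / 2 ^ j) x ≠ 0 := anc hm hsigned hMR hfM j (by omega)
          by_cases hCM : M / 2 ^ j = N
          · left; exact ⟨j, hCM⟩
          · exfalso
            have hCle : M / 2 ^ j ≤ 2 ^ m - 1 := le_trans (Nat.div_le_self _ _) hMR
            obtain ⟨hL, hR⟩ := hsigned (N / 2) (by omega) (by omega)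
            rcases (by omega : (M / 2 ^ j = 2 * (N / 2) ∧ N = 2 * (N / 2) + 1) ∨
                (M / 2 ^ j = 2 * (N / 2) + 1 ∧ N = 2 * (N / 2))) with ⟨hc1, hc2⟩ | ⟨hc1, hc2⟩
            · have hx1 : x ∈ support (f (2 * (N / 2))) := by rw [← hc1]; exact hfC
              have hx2 : x ∈ support (f (2 * (N / 2) + 1)) := by rw [← hc2]; exact hfN
              linarith [(hL hx1).2, (hR hx2).2]
            · have hx1 : x ∈ support (f (2 * (N / 2) + 1)) := by rw [← hc1]; exact hfC
              have hx2 : x ∈ support (f (2 * (N / 2))) := by rw [← hc2]; exact hfN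
              linarith [(hL hx2).2, (hR hx1).2]

private lemma main_lt (hm : 1 ≤ m)
    (hsigned : ∀ N, 1 ≤ N → 2 * N + 1 ≤ 2 ^ m - 1 →
      support (f (2 * N)) ⊆ {y | y ∈ unitCube n ∧ 0 < f N y} ∧
      support (f (2 * N + 1)) ⊆ {y | y ∈ unitCube n ∧ f N y < 0})
    {N M : ℕ} (hN1 : 1 ≤ N) (hNR : N ≤ 2 ^ m - 1) (hM1 : 1 ≤ M) (hMR : M ≤ 2 ^ m - 1)
    (hfN : f N x < 0) (hfM : 0 < f M x) : treePointN N < treePointN M := by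
  have hfN' : f N x ≠ 0 := ne_of_lt hfN
  have hfM' : f M x ≠ 0 := ne_of_gt hfM
  have hNM : N ≠ M := by intro h; rw [h] at hfN; linarith
  have hpow1 : 2 ^ m = 2 * 2 ^ (m - 1) := by rw [← pow_succ']; congr 1; omega
  have hpow2 : 1 ≤ 2 ^ (m - 1) := Nat.one_le_two_pow
  rcases comp hm hsigned (N + M) N M le_rfl hN1 hNR hM1 hMR hfN' hfM' with ⟨i, hi⟩ | ⟨i, hi⟩
  · rcases i with _ | j
    · simp only [pow_zero, Nat.div_one] at hi; exact absurd hi.symm hNM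
    · have hC : M / 2 ^ j / 2 = N := by
        rw [Nat.div_div_eq_div_mul, ← pow_succ]; exact hi
      have hfC : f (M / 2 ^ j) x ≠ 0 := anc hm hsigned hMR hfM' j (by omega)
      have hCR : M / 2 ^ j ≤ 2 ^ m - 1 := le_trans (Nat.div_le_self _ _) hMR
      obtain ⟨hL, hR⟩ := hsigned N hN1 (by omega)
      rcases (by omega : M / 2 ^ j = 2 * N ∨ M / 2 ^ j = 2 * N + 1) with hc | hc
      · exfalso
        have hx : x ∈ support (f (2 * N)) := by rw [← hc]; exact hfC
        linarith [(hL hx).2]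
      · exact treePoint_right hN1 hc
  · rcases i with _ | j
    · simp only [pow_zero, Nat.div_one] at hi; exact absurd hi hNM
    · have hC : N / 2 ^ j / 2 = M := by
        rw [Nat.div_div_eq_div_mul, ← pow_succ]; exact hi
      have hfC : f (N / 2 ^ j) x ≠ 0 := anc hm hsigned hNR hfN' j (by omega)
      have hCR : N / 2 ^ j ≤ 2 ^ m - 1 := le_trans (Nat.div_le_self _ _) hNR
      obtain ⟨hL, hR⟩ := hsigned M hM1 (by omega)
      rcases (by omega : N / 2 ^ j = 2 * M ∨ N / 2 ^ j = 2 * M + 1) with hc | hc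
      · exact treePoint_left hM1 hc
      · exfalso
        have hx : x ∈ support (f (2 * M + 1)) := by rw [← hc]; exact hfC
        linarith [(hR hx).2]

end Tree

/-- Let `{f_N : 1 ≤ N ≤ 2^m - 1}` be a signed tree system on `Q = [0,1]^n` (indexed so that
the vertex `N = 2^k + j - 1` has left child `2N` and right child `2N + 1`), with the support
and sign conditions holding everywhere, and let `σ` be the (unique) permutation of
`{1, …, 2^m - 1}` for which `t_{σ(1)} < t_{σ(2)} < … < t_{σ(2^m - 1)}`. Then for every
`x ∈ ℝⁿ` there is an `l` with `0 ≤ l ≤ 2^m - 1` such that `f_{σ(h)}(x) ≤ 0` for all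
`1 ≤ h ≤ l` and `f_{σ(h)}(x) ≥ 0` for all `l < h ≤ 2^m - 1`. -/
theorem signedTreeSystem_sign_split (n m : ℕ) (hm : 1 ≤ m)
    (f : ℕ → EuclideanSpace ℝ (Fin n) → ℝ)
    (hsupp : ∀ N, 1 ≤ N → N ≤ 2 ^ m - 1 → support (f N) ⊆ unitCube n)
    (hsigned : ∀ N, 1 ≤ N → 2 * N + 1 ≤ 2 ^ m - 1 →
      support (f (2 * N)) ⊆ {y | y ∈ unitCube n ∧ 0 < f N y} ∧
      support (f (2 * N + 1)) ⊆ {y | y ∈ unitCube n ∧ f N y < 0})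
    (σ : ℕ → ℕ)
    (hσ : Set.BijOn σ (Set.Icc 1 (2 ^ m - 1)) (Set.Icc 1 (2 ^ m - 1)))
    (hσmono : StrictMonoOn (fun N => treePointN (σ N)) (Set.Icc 1 (2 ^ m - 1)))
    (x : EuclideanSpace ℝ (Fin n)) :
    ∃ l : ℕ, l ≤ 2 ^ m - 1 ∧
      (∀ h, 1 ≤ h → h ≤ l → f (σ h) x ≤ 0) ∧
      (∀ h, l < h → h ≤ 2 ^ m - 1 → 0 ≤ f (σ h) x) := by
  classical
  set S := (Finset.Icc 1 (2 ^ m - 1)).filter (fun h => f (σ h) x < 0) with hS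
  by_cases hSne : S.Nonempty
  · have hlmem := S.max'_mem hSne
    have hlmem' := Finset.mem_filter.mp hlmem
    obtain ⟨hmIcc, hfl⟩ := hlmem'
    obtain ⟨hl1, hlR⟩ := Finset.mem_Icc.mp hmIcc
    refine ⟨S.max' hSne, hlR, ?_, ?_⟩
    · intro h h1 hl
      by_contra hpos
      push_neg at hpos
      have hhR : h ≤ 2 ^ m - 1 := le_trans hl hlR
      rcases eq_or_lt_of_le hl with heq | hlt
      · rw [heq] at hpos; linarith
      · have hmem1 : h ∈ Set.Icc 1 (2 ^ m - 1) := ⟨h1, hhR⟩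
        have hmem2 : S.max' hSne ∈ Set.Icc 1 (2 ^ m - 1) := ⟨hl1, hlR⟩
        have hmono := hσmono hmem1 hmem2 hlt
        have hσh := hσ.mapsTo hmem1
        have hσl := hσ.mapsTo hmem2
        have := main_lt hm hsigned hσl.1 hσl.2 hσh.1 hσh.2 hfl hpos
        simp only at hmono
        linarith
    · intro h hlh hhR
      by_contra hneg
      push_neg at hneg
      have hmem : h ∈ S :=
        Finset.mem_filter.mpr ⟨Finset.mem_Icc.mpr ⟨by omega, hhR⟩, hneg⟩
      have := S.le_max' h hmem
      omega
  · refine ⟨0, Nat.zero_le _, ?_, ?_⟩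
    · intro h h1 h0; omega
    · intro h h0 hhR
      by_contra hneg
      push_neg at hneg
      exact hSne ⟨h, Finset.mem_filter.mpr ⟨Finset.mem_Icc.mpr ⟨by omega, hhR⟩, hneg⟩⟩
end

section
/- Let σ be the unique permutation of {1, …, 2^m − 1} with t_{σ(1)} < t_{σ(2)} < … < t_{σ(2^m−1)}. Then for every signed tree system f_1, …, f_{2^m−1} on Q = [0,1]^n (with the support and sign conditions holding everywhere) and for every x ∈ ℝⁿ, one has max_{1 ≤ l < 2^m} |Σ_{N=1}^{l} f_{σ(N)}(x)| ≥ (1/3) Σ_{N=1}^{2^m−1} |f_N(x)|. -/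
open MeasureTheory Function

namespace KaragAux

noncomputable def pathV (g : ℕ → ℝ) : ℕ → ℕ :=
  Nat.rec 1 (fun _ p => if 0 < g p then 2 * p else 2 * p + 1)

variable {g : ℕ → ℝ}

@[simp] lemma pathV_zero : pathV g 0 = 1 := rfl

lemma pathV_succ (i : ℕ) :
    pathV g (i+1) = if 0 < g (pathV g i) then 2 * pathV g i else 2 * pathV g i + 1 := rfl

lemma pathV_bounds (i : ℕ) : 2^i ≤ pathV g i ∧ pathV g i < 2^(i+1) := by
  induction i with
  | zero => simp
  | succ i ih =>
    rw [pathV_succ]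
    have h1 := ih.1; have h2 := ih.2
    have : (2:ℕ)^(i+1) = 2 * 2^i := by ring
    have : (2:ℕ)^(i+1+1) = 2 * 2^(i+1) := by ring
    split <;> omega

lemma pathV_pos (i : ℕ) : 1 ≤ pathV g i :=
  le_trans Nat.one_le_two_pow (pathV_bounds i).1

lemma pathV_desc (i d : ℕ) :
    pathV g i * 2^d ≤ pathV g (i+d) ∧ pathV g (i+d) < (pathV g i + 1) * 2^d := by
  induction d with
  | zero => simp
  | succ d ih =>
    have he : i + (d+1) = (i+d) + 1 := by omega
    rw [he, pathV_succ]
    have h1 := ih.1; have h2 := ih.2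
    have hp : (2:ℕ)^(d+1) = 2^d * 2 := by ring
    split <;> constructor <;> nlinarith [h1, h2]

lemma pathV_strictMono : StrictMono (pathV g) := by
  apply strictMono_nat_of_lt_succ
  intro i
  have := pathV_pos (g := g) i
  rw [pathV_succ]
  split <;> omega

lemma log_of_desc {N D d : ℕ} (hN : 1 ≤ N) (h1 : N * 2^d ≤ D) (h2 : D < (N+1) * 2^d) :
    Nat.log 2 D = Nat.log 2 N + d := by
  have hk1 : 2 ^ Nat.log 2 N ≤ N := Nat.pow_log_le_self 2 (by omega)
  have hk2 : N < 2 ^ (Nat.log 2 N + 1) := Nat.lt_pow_succ_log_self (by norm_num) N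
  apply Nat.log_eq_of_pow_le_of_lt_pow
  · calc 2 ^ (Nat.log 2 N + d) = 2 ^ Nat.log 2 N * 2^d := by ring
    _ ≤ N * 2^d := Nat.mul_le_mul_right _ hk1
    _ ≤ D := h1
  · calc D < (N+1) * 2^d := h2
    _ ≤ 2 ^ (Nat.log 2 N + 1) * 2^d := Nat.mul_le_mul_right _ (by omega)
    _ = 2 ^ (Nat.log 2 N + d + 1) := by ring

lemma treePoint_desc_bounds {N D d : ℕ} (hN : 1 ≤ N) (h1 : N * 2^d ≤ D)
    (h2 : D < (N+1) * 2^d) :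
    ((N:ℝ) - 2 ^ Nat.log 2 N) / 2 ^ Nat.log 2 N < treePointN D ∧
    treePointN D < ((N:ℝ) + 1 - 2 ^ Nat.log 2 N) / 2 ^ Nat.log 2 N := by
  set k := Nat.log 2 N with hk
  have hlog : Nat.log 2 D = k + d := log_of_desc hN h1 h2
  have hK : (0:ℝ) < 2^k := by positivity
  have hE : (0:ℝ) < 2^d := by positivity
  have h1' : (N:ℝ) * 2^d ≤ D := by exact_mod_cast h1
  have h2' : (D:ℝ) + 1 ≤ ((N:ℝ)+1) * 2^d := by exact_mod_cast Nat.succ_le_of_lt h2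
  rw [treePointN, hlog]
  have hpow : (2:ℝ) ^ (k + d + 1) = 2^k * 2^d * 2 := by ring
  have hpow2 : (2:ℝ) ^ (k + d) = 2^k * 2^d := by ring
  constructor
  · rw [div_lt_div_iff₀ hK (by positivity), hpow, hpow2]
    nlinarith
  · rw [div_lt_div_iff₀ (by positivity) hK, hpow, hpow2]
    nlinarith

lemma t_left {N D d : ℕ} (hN : 1 ≤ N) (h1 : 2*N * 2^d ≤ D) (h2 : D < (2*N+1) * 2^d) :
    treePointN D < treePointN N := by
  have hlogc : Nat.log 2 (2*N) = Nat.log 2 N + 1 := by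
    apply log_of_desc hN (d := 1) <;> omega
  have hb := (treePoint_desc_bounds (N := 2*N) (by omega) h1 h2).2
  rw [hlogc] at hb
  have hNe : (((2*N : ℕ):ℝ) + 1 - 2^(Nat.log 2 N + 1))/2^(Nat.log 2 N + 1) = treePointN N := by
    rw [treePointN]; push_cast; ring
  exact hNe ▸ hb

lemma t_right {N D d : ℕ} (hN : 1 ≤ N) (h1 : (2*N+1) * 2^d ≤ D) (h2 : D < (2*N+2) * 2^d) :
    treePointN N < treePointN D := by
  have hlogc : Nat.log 2 (2*N+1) = Nat.log 2 N + 1 := by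
    apply log_of_desc hN (d := 1) <;> omega
  have hb := (treePoint_desc_bounds (N := 2*N+1) (by omega) h1 (by
      have : 2*N+1+1 = 2*N+2 := rfl
      rw [this]; exact h2)).1
  rw [hlogc] at hb
  have hNe : (((2*N+1 : ℕ):ℝ) - 2^(Nat.log 2 N + 1))/2^(Nat.log 2 N + 1) = treePointN N := by
    rw [treePointN]; push_cast; ring
  exact hNe ▸ hb

lemma pathV_t_lt {i j : ℕ} (hij : i < j) (hpos : 0 < g (pathV g i)) :
    treePointN (pathV g j) < treePointN (pathV g i) := by
  have hch : pathV g (i+1) = 2 * pathV g i := by rw [pathV_succ, if_pos hpos]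
  obtain ⟨d, hd⟩ : ∃ d, j = (i+1) + d := ⟨j - (i+1), by omega⟩
  have hdesc := pathV_desc (g := g) (i+1) d
  rw [← hd, hch] at hdesc
  exact t_left (pathV_pos i) hdesc.1 hdesc.2

lemma pathV_t_gt {i j : ℕ} (hij : i < j) (hpos : ¬ 0 < g (pathV g i)) :
    treePointN (pathV g i) < treePointN (pathV g j) := by
  have hch : pathV g (i+1) = 2 * pathV g i + 1 := by rw [pathV_succ, if_neg hpos]
  obtain ⟨d, hd⟩ : ∃ d, j = (i+1) + d := ⟨j - (i+1), by omega⟩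
  have hdesc := pathV_desc (g := g) (i+1) d
  rw [← hd, hch] at hdesc
  refine t_right (pathV_pos i) hdesc.1 ?_
  have h2 := hdesc.2
  have : 2 * pathV g i + 1 + 1 = 2 * pathV g i + 2 := rfl
  rwa [this] at h2

end KaragAux

/-- (Karagulyan's lemma.) Let `σ` be the (unique) permutation of `{1, …, 2^m - 1}` with
`t_{σ(1)} < … < t_{σ(2^m - 1)}`. Then for every signed tree system `f_1, …, f_{2^m - 1}`
on `Q = [0,1]^n` (vertex `N` has left child `2N` and right child `2N + 1`; support and sign
conditions holding everywhere) and every `x ∈ ℝⁿ`,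
`max_{1 ≤ l < 2^m} |Σ_{N=1}^{l} f_{σ(N)}(x)| ≥ (1/3) Σ_{N=1}^{2^m - 1} |f_N(x)|`,
i.e. some partial sum along `σ` is at least one third of the sum of absolute values. -/
theorem signedTreeSystem_partial_sum_lower_bound (n m : ℕ) (hm : 1 ≤ m)
    (σ : ℕ → ℕ)
    (hσ : Set.BijOn σ (Set.Icc 1 (2 ^ m - 1)) (Set.Icc 1 (2 ^ m - 1)))
    (hσmono : StrictMonoOn (fun N => treePointN (σ N)) (Set.Icc 1 (2 ^ m - 1)))
    (f : ℕ → EuclideanSpace ℝ (Fin n) → ℝ)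
    (hsupp : ∀ N, 1 ≤ N → N ≤ 2 ^ m - 1 → support (f N) ⊆ unitCube n)
    (hsigned : ∀ N, 1 ≤ N → 2 * N + 1 ≤ 2 ^ m - 1 →
      support (f (2 * N)) ⊆ {y | y ∈ unitCube n ∧ 0 < f N y} ∧
      support (f (2 * N + 1)) ⊆ {y | y ∈ unitCube n ∧ f N y < 0})
    (x : EuclideanSpace ℝ (Fin n)) :
    ∃ l : ℕ, 1 ≤ l ∧ l ≤ 2 ^ m - 1 ∧
      (1 / 3) * ∑ N ∈ Finset.Icc 1 (2 ^ m - 1), |f N x| ≤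
        |∑ N ∈ Finset.Icc 1 l, f (σ N) x| := by
  classical
  set g : ℕ → ℝ := fun N => f N x with hg
  set v : ℕ → ℕ := KaragAux.pathV g with hv
  have hpow2 : 2 * 2^(m-1) = 2^m := by
    conv_rhs => rw [show m = (m-1)+1 by omega]
    ring
  have hone : 1 ≤ 2^(m-1) := Nat.one_le_two_pow
  have hMpos : 1 ≤ 2^m - 1 := by omega
  -- path vertices lie in the index range
  have hvmem : ∀ i, i < m → v i ∈ Set.Icc 1 (2^m - 1) := by
    intro i hi
    have hb := KaragAux.pathV_bounds (g := g) i
    have h2 : 2^(i+1) ≤ 2^m := Nat.pow_le_pow_right (by norm_num) (by omega)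
    have hp := KaragAux.pathV_pos (g := g) i
    rw [← hv] at hb hp
    exact Set.mem_Icc.mpr ⟨hp, by omega⟩
  -- vanishing off the path
  have hvan : ∀ N, 1 ≤ N → N ≤ 2^m - 1 → N ≠ v (Nat.log 2 N) → f N x = 0 := by
    intro N
    induction N using Nat.strong_induction_on with
    | _ N ih =>
      intro hN1 hN2 hNe
      rcases eq_or_lt_of_le hN1 with h1 | h1
      · exfalso; apply hNe; rw [← h1]; simp [hv]
      set P := N / 2 with hP
      have hP1 : 1 ≤ P := by omega
      have hchild : N = 2*P ∨ N = 2*P + 1 := by omega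
      have hlogN : Nat.log 2 N = Nat.log 2 P + 1 :=
        KaragAux.log_of_desc hP1 (d := 1) (by omega) (by omega)
      have h2P1 : 2*P + 1 ≤ 2^m - 1 := by omega
      have hsig := hsigned P hP1 h2P1
      by_cases hPv : P = v (Nat.log 2 P)
      · -- parent on path, N is the wrong child
        have hstep : v (Nat.log 2 P + 1) ≠ N := by
          rw [← hlogN]; exact fun he => hNe he.symm
        rw [hv, KaragAux.pathV_succ, ← hv, ← hPv] at hstep
        rcases hchild with h | h
        · have hgp : ¬ 0 < g P := by
            intro hgp; rw [if_pos hgp] at hstep; omega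
          by_contra hne
          exact hgp (hsig.1 (show x ∈ support (f (2*P)) by
            rw [mem_support, ← h]; exact hne)).2
        · have hgp : 0 < g P := by
            by_contra hgp; rw [if_neg hgp] at hstep; omega
          by_contra hne
          have := (hsig.2 (show x ∈ support (f (2*P+1)) by
            rw [mem_support, ← h]; exact hne)).2
          exact absurd hgp (not_lt.mpr this.le)
      · -- parent off path: f P x = 0, children vanish
        have hfP : f P x = 0 := ih P (by omega) hP1 (by omega) hPv
        rcases hchild with h | h
        · by_contra hne
          have := (hsig.1 (show x ∈ support (f (2*P)) by
            rw [mem_support, ← h]; exact hne)).2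
          rw [show f P x = 0 from hfP] at this
          exact lt_irrefl _ this
        · by_contra hne
          have := (hsig.2 (show x ∈ support (f (2*P+1)) by
            rw [mem_support, ← h]; exact hne)).2
          rw [show f P x = 0 from hfP] at this
          exact lt_irrefl _ this
  set PS : Finset ℕ := (Finset.range m).image v with hPS
  have hlogmem : ∀ N, 1 ≤ N → N ≤ 2^m - 1 → N = v (Nat.log 2 N) → N ∈ PS := by
    intro N h1 h2 he
    rw [hPS, Finset.mem_image]
    refine ⟨Nat.log 2 N, Finset.mem_range.mpr ?_, he.symm⟩
    exact Nat.log_lt_of_lt_pow (by omega) (by omega)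
  have hPSsub : PS ⊆ Finset.Icc 1 (2^m-1) := by
    intro N hN
    rw [hPS, Finset.mem_image] at hN
    obtain ⟨i, hi, rfl⟩ := hN
    have := hvmem i (Finset.mem_range.mp hi)
    rw [Set.mem_Icc] at this
    exact Finset.mem_Icc.mpr this
  have hvinj : ∀ i ∈ Finset.range m, ∀ j ∈ Finset.range m, v i = v j → i = j :=
    fun i _ j _ h => (KaragAux.pathV_strictMono (g := g)).injective h
  -- total absolute sum over the path
  have habs : ∑ N ∈ Finset.Icc 1 (2^m-1), |f N x| = ∑ i ∈ Finset.range m, |g (v i)| := by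
    rw [← Finset.sum_subset hPSsub (by
      intro N hN hNP
      simp only [Finset.mem_Icc] at hN
      rw [abs_eq_zero]
      exact hvan N hN.1 hN.2 (fun he => hNP (hlogmem N hN.1 hN.2 he)))]
    rw [hPS, Finset.sum_image hvinj]
  -- choose positions of path vertices under σ
  have hLex : ∀ i, ∃ l, i < m → l ∈ Set.Icc 1 (2^m-1) ∧ σ l = v i := by
    intro i
    by_cases hi : i < m
    · obtain ⟨l, hl, hle⟩ := hσ.surjOn (hvmem i hi)
      exact ⟨l, fun _ => ⟨hl, hle⟩⟩
    · exact ⟨0, fun h => absurd h hi⟩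
  choose L hL using hLex
  have hLmem : ∀ i, i < m → L i ∈ Set.Icc 1 (2^m-1) := fun i hi => (hL i hi).1
  have hLσ : ∀ i, i < m → σ (L i) = v i := fun i hi => (hL i hi).2
  have hmono := hσmono.monotoneOn
  -- partial sums at positions of path vertices
  have key : ∀ i, i < m → ∑ N ∈ Finset.Icc 1 (L i), f (σ N) x =
      ∑ j ∈ (Finset.range m).filter
        (fun j => treePointN (v j) ≤ treePointN (v i)), g (v j) := by
    intro i hi
    have hLi := hLmem i hi
    rw [Set.mem_Icc] at hLi
    rw [← Finset.sum_filter_of_ne (p := fun N => σ N ∈ PS) (by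
      intro N hN hne
      simp only [Finset.mem_Icc] at hN
      have hNI : N ∈ Set.Icc 1 (2^m-1) := Set.mem_Icc.mpr ⟨hN.1, le_trans hN.2 hLi.2⟩
      have hσN := hσ.mapsTo hNI
      rw [Set.mem_Icc] at hσN
      by_contra hns
      exact hne (hvan _ hσN.1 hσN.2 (fun he => hns (hlogmem _ hσN.1 hσN.2 he))))]
    refine (Finset.sum_bij (fun j _ => L j) ?_ ?_ ?_ ?_).symm
    · intro j hj
      simp only [Finset.mem_filter, Finset.mem_range] at hj
      have hLj := hLmem j hj.1
      rw [Set.mem_Icc] at hLj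
      have hle : L j ≤ L i := by
        by_contra hlt
        have := hσmono (hLmem i hi) (hLmem j hj.1) (by omega)
        simp only [hLσ i hi, hLσ j hj.1] at this
        exact absurd hj.2 (not_le.mpr this)
      refine Finset.mem_filter.mpr ⟨Finset.mem_Icc.mpr ⟨hLj.1, hle⟩, ?_⟩
      rw [hLσ j hj.1]
      exact Finset.mem_image.mpr ⟨j, Finset.mem_range.mpr hj.1, rfl⟩
    · intro j hj j' hj' he
      simp only [Finset.mem_filter, Finset.mem_range] at hj hj'
      have he' : L j = L j' := he
      have : v j = v j' := by rw [← hLσ j hj.1, ← hLσ j' hj'.1, he']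
      exact (KaragAux.pathV_strictMono (g := g)).injective this
    · intro N hN
      simp only [Finset.mem_filter, Finset.mem_Icc] at hN
      obtain ⟨⟨hN1, hN2⟩, hNPS⟩ := hN
      rw [hPS, Finset.mem_image] at hNPS
      obtain ⟨j, hjr, hjv⟩ := hNPS
      rw [Finset.mem_range] at hjr
      have hNI : N ∈ Set.Icc 1 (2^m-1) := Set.mem_Icc.mpr ⟨hN1, le_trans hN2 hLi.2⟩
      have hLjN : L j = N := hσ.injOn (hLmem j hjr) hNI (by rw [hLσ j hjr, hjv])
      refine ⟨j, Finset.mem_filter.mpr ⟨Finset.mem_range.mpr hjr, ?_⟩, hLjN⟩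
      have := hmono hNI (hLmem i hi) hN2
      simp only [hLσ i hi] at this
      rw [hjv]
      exact this
    · intro j hj
      simp only [Finset.mem_filter, Finset.mem_range] at hj
      rw [hLσ j hj.1]
  -- full sum
  have hfull : ∑ N ∈ Finset.Icc 1 (2^m-1), f (σ N) x = ∑ j ∈ Finset.range m, g (v j) := by
    rw [← Finset.sum_filter_of_ne (p := fun N => σ N ∈ PS) (by
      intro N hN hne
      simp only [Finset.mem_Icc] at hN
      have hσN := hσ.mapsTo (Set.mem_Icc.mpr hN)
      rw [Set.mem_Icc] at hσN
      by_contra hns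
      exact hne (hvan _ hσN.1 hσN.2 (fun he => hns (hlogmem _ hσN.1 hσN.2 he))))]
    refine (Finset.sum_bij (fun j _ => L j) ?_ ?_ ?_ ?_).symm
    · intro j hj
      rw [Finset.mem_range] at hj
      have hLj := hLmem j hj
      rw [Set.mem_Icc] at hLj
      refine Finset.mem_filter.mpr ⟨Finset.mem_Icc.mpr hLj, ?_⟩
      rw [hLσ j hj]
      exact Finset.mem_image.mpr ⟨j, Finset.mem_range.mpr hj, rfl⟩
    · intro j hj j' hj' he
      rw [Finset.mem_range] at hj hj'
      have he' : L j = L j' := he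
      have : v j = v j' := by rw [← hLσ j hj, ← hLσ j' hj', he']
      exact (KaragAux.pathV_strictMono (g := g)).injective this
    · intro N hN
      simp only [Finset.mem_filter, Finset.mem_Icc] at hN
      obtain ⟨⟨hN1, hN2⟩, hNPS⟩ := hN
      rw [hPS, Finset.mem_image] at hNPS
      obtain ⟨j, hjr, hjv⟩ := hNPS
      rw [Finset.mem_range] at hjr
      have hLjN : L j = N :=
        hσ.injOn (hLmem j hjr) (Set.mem_Icc.mpr ⟨hN1, hN2⟩) (by rw [hLσ j hjr, hjv])
      exact ⟨j, Finset.mem_range.mpr hjr, hLjN⟩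
    · intro j hj
      rw [Finset.mem_range] at hj
      rw [hLσ j hj]
  -- sign blocks
  set Dneg : Finset ℕ := (Finset.range (m-1)).filter (fun i => ¬ 0 < g (v i)) with hDneg
  set Dpos : Finset ℕ := (Finset.range (m-1)).filter (fun i => 0 < g (v i)) with hDpos
  set c : ℝ := g (v (m-1)) with hc
  set An : ℝ := ∑ j ∈ Dneg, |g (v j)| with hAn
  set Bp : ℝ := ∑ j ∈ Dpos, g (v j) with hBp
  have hAn_nonneg : 0 ≤ An := Finset.sum_nonneg (fun j _ => abs_nonneg _)
  have hBp_nonneg : 0 ≤ Bp := Finset.sum_nonneg (fun j hj => by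
    rw [hDpos, Finset.mem_filter] at hj
    exact hj.2.le)
  have hDmem : ∀ j, j ∈ Dneg ↔ (j < m - 1 ∧ ¬ 0 < g (v j)) := by
    intro j
    rw [hDneg, Finset.mem_filter, Finset.mem_range]
  have hDnegsum : ∑ j ∈ Dneg, g (v j) = -An := by
    rw [hAn, ← Finset.sum_neg_distrib]
    apply Finset.sum_congr rfl
    intro j hj
    rw [abs_of_nonpos (not_lt.mp ((hDmem j).mp hj).2), neg_neg]
  have hDpossum : ∑ j ∈ Dpos, |g (v j)| = Bp := by
    rw [hBp]
    apply Finset.sum_congr rfl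
    intro j hj
    rw [hDpos, Finset.mem_filter] at hj
    exact abs_of_pos hj.2
  have hm1 : m - 1 + 1 = m := by omega
  have hsplit : ∀ G : ℕ → ℝ, ∑ j ∈ Finset.range m, G j =
      (∑ j ∈ Dpos, G j) + (∑ j ∈ Dneg, G j) + G (m-1) := by
    intro G
    conv_lhs => rw [← hm1]
    rw [Finset.sum_range_succ, hDpos, hDneg,
      Finset.sum_filter_add_sum_filter_not (Finset.range (m-1)) (fun i => 0 < g (v i)) G]
  have hStot : ∑ N ∈ Finset.Icc 1 (2^m-1), |f N x| = An + |c| + Bp := by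
    rw [habs, hsplit (fun j => |g (v j)|), hDpossum]
    rw [← hAn, ← hc]
    ring
  have hP3 : ∑ N ∈ Finset.Icc 1 (2^m-1), f (σ N) x = -An + c + Bp := by
    rw [hfull, hsplit (fun j => g (v j)), hDnegsum, hc]
    ring
  have hmne : m - 1 ∉ Dneg := fun h => absurd ((hDmem _).mp h).1 (lt_irrefl _)
  -- the cut at v (m-1)
  have htarget2 : (Finset.range m).filter
      (fun j => treePointN (v j) ≤ treePointN (v (m-1))) = insert (m-1) Dneg := by
    ext j
    simp only [Finset.mem_filter, Finset.mem_range, Finset.mem_insert]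
    constructor
    · rintro ⟨hjm, hle⟩
      by_cases hj : j = m-1
      · left; exact hj
      · right
        have hjlt : j < m - 1 := by omega
        refine (hDmem j).mpr ⟨hjlt, ?_⟩
        intro hgj
        exact absurd hle (not_le.mpr (KaragAux.pathV_t_lt hjlt hgj))
    · rintro (rfl | hj)
      · exact ⟨by omega, le_refl _⟩
      · obtain ⟨hj1, hj2⟩ := (hDmem j).mp hj
        exact ⟨by omega, le_of_lt (KaragAux.pathV_t_gt (show j < m-1 from hj1) hj2)⟩
  have hP2 : ∑ N ∈ Finset.Icc 1 (L (m-1)), f (σ N) x = -An + c := by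
    rw [key (m-1) (by omega), htarget2, Finset.sum_insert hmne, hDnegsum, hc]
    ring
  -- conclude
  rcases le_or_gt 0 c with hcpos | hcneg
  · rcases Dneg.eq_empty_or_nonempty with hD | hD
    · -- Dneg empty : An = 0, use the full sum
      have hAn0 : An = 0 := by rw [hAn, hD, Finset.sum_empty]
      refine ⟨2^m - 1, hMpos, le_refl _, ?_⟩
      rw [hStot, hP3, hAn0, abs_of_nonneg hcpos]
      simp only [neg_zero, zero_add]
      have h1 := le_abs_self (c + Bp)
      have h2 : (0:ℝ) ≤ |c + Bp| := abs_nonneg _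
      linarith
    · -- use max of Dneg
      set i₀ := Dneg.max' hD with hi₀
      have hi₀mem : i₀ ∈ Dneg := Dneg.max'_mem hD
      have hi₀lt : i₀ < m - 1 := ((hDmem _).mp hi₀mem).1
      have hi₀neg : ¬ 0 < g (v i₀) := ((hDmem _).mp hi₀mem).2
      have htarget1 : (Finset.range m).filter
          (fun j => treePointN (v j) ≤ treePointN (v i₀)) = Dneg := by
        ext j
        simp only [Finset.mem_filter, Finset.mem_range]
        constructor
        · rintro ⟨hjm, hle⟩
          by_cases hj : j = i₀
          · rw [hj]; exact hi₀mem
          · rcases lt_or_gt_of_ne hj with hlt | hgt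
            · refine (hDmem j).mpr ⟨?_, ?_⟩
              · omega
              · intro hgj
                exact absurd hle (not_le.mpr (KaragAux.pathV_t_lt hlt hgj))
            · exfalso
              exact absurd hle (not_le.mpr (KaragAux.pathV_t_gt hgt hi₀neg))
        · intro hj
          have hjDneg := (hDmem j).mp hj
          refine ⟨by omega, ?_⟩
          have hjle : j ≤ i₀ := Dneg.le_max' j hj
          rcases eq_or_lt_of_le hjle with he | hlt
          · rw [he]
          · exact le_of_lt (KaragAux.pathV_t_gt hlt hjDneg.2)
      have hP1 : ∑ N ∈ Finset.Icc 1 (L i₀), f (σ N) x = -An := by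
        rw [key i₀ (by omega), htarget1, hDnegsum]
      rcases le_total An |(-An + c + Bp)| with hcmp | hcmp
      · refine ⟨2^m - 1, hMpos, le_refl _, ?_⟩
        rw [hStot, hP3, abs_of_nonneg hcpos]
        have := le_abs_self (-An + c + Bp)
        linarith
      · have hLmem0 := hLmem i₀ (by omega)
        rw [Set.mem_Icc] at hLmem0
        refine ⟨L i₀, hLmem0.1, hLmem0.2, ?_⟩
        rw [hStot, hP1, abs_neg, abs_of_nonneg hAn_nonneg, abs_of_nonneg hcpos]
        have h3 := le_abs_self (-An + c + Bp)
        have h4 := abs_nonneg (-An + c + Bp)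
        linarith
  · -- c < 0 : use cut at m-1 and the full sum
    rcases le_total |(-An + c)| |(-An + c + Bp)| with hcmp | hcmp
    · refine ⟨2^m - 1, hMpos, le_refl _, ?_⟩
      rw [hStot, hP3]
      have h1 := neg_le_abs (-An + c)
      have h2 := le_abs_self (-An + c + Bp)
      rw [abs_of_neg hcneg]
      linarith
    · have hLmem0 := hLmem (m-1) (by omega)
      rw [Set.mem_Icc] at hLmem0
      refine ⟨L (m-1), hLmem0.1, hLmem0.2, ?_⟩
      rw [hStot, hP2]
      have h1 := neg_le_abs (-An + c)
      have h2 := le_abs_self (-An + c + Bp)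
      rw [abs_of_neg hcneg]
      linarith
end

section
/- Let {E_N : 1 ≤ N ≤ 2^m − 1} be measurable subsets of Q = [0,1]^n, each of positive Lebesgue measure, whose indicators form a tree system. Let S be a nonempty finite set of vertices of the full binary tree of height m (identified with indices in {1, …, 2^m−1}). If all vertices of S lie on a common ray of the tree, then ⋂_{N ∈ S} E_N coincides, up to a set of Lebesgue measure zero, with E_{N'}, where N' is the element of S of maximal height, and in particular has positive measure. If the vertices of S do not all lie on a common ray, then ⋂_{N ∈ S} E_N has Lebesgue measure zero. -/
open MeasureTheory Function

lemma div_pow_log_eq_one (b : ℕ) (hb : 1 ≤ b) : b / 2 ^ Nat.log 2 b = 1 := by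
  have h1 : 2 ^ Nat.log 2 b ≤ b := Nat.pow_log_le_self 2 (by omega)
  have h2 : b < 2 ^ (Nat.log 2 b + 1) := Nat.lt_pow_succ_log_self (by norm_num) b
  rw [pow_succ] at h2
  have hp : 0 < 2 ^ Nat.log 2 b := Nat.pow_pos (by norm_num)
  refine le_antisymm ?_ ?_
  · have := (Nat.div_lt_iff_lt_mul hp).mpr (by omega : b < 2 * 2 ^ Nat.log 2 b)
    omega
  · exact (Nat.one_le_div_iff hp).mpr h1

lemma anc_sub {n m : ℕ} (E : ℕ → Set (EuclideanSpace ℝ (Fin n)))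
    (htree : ∀ N, 1 ≤ N → 2 * N + 1 ≤ 2 ^ m - 1 →
      volume (E (2 * N) ∩ E (2 * N + 1)) = 0 ∧
      volume ((E (2 * N) ∪ E (2 * N + 1)) \ E N) = 0) :
    ∀ i b a, 1 ≤ a → b ≤ 2 ^ m - 1 → b / 2 ^ i = a →
      volume (E b \ E a) = 0 := by
  intro i
  induction i with
  | zero =>
    intro b a _ _ h
    simp only [pow_zero, Nat.div_one] at h
    subst h
    simp
  | succ i ih =>
    intro b a ha hb h
    have hpow : (2:ℕ) ≤ 2 ^ (i+1) := by
      calc (2:ℕ) = 2 ^ 1 := rfl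
        _ ≤ 2 ^ (i+1) := Nat.pow_le_pow_right (by norm_num) (by omega)
    have hb2 : 2 ≤ b := by
      by_contra hc
      have : b / 2 ^ (i+1) = 0 := Nat.div_eq_of_lt (by omega)
      omega
    set c := b / 2 with hcdef
    have hc1 : 1 ≤ c := by omega
    have hm1 : 1 ≤ m := by
      by_contra hc
      have : m = 0 := by omega
      subst this
      simp at hb
      omega
    have h2m : 2 ^ m % 2 = 0 := by
      have : (2:ℕ) ∣ 2 ^ m := dvd_pow_self 2 (by omega)
      omega
    have hcm : 2 * c + 1 ≤ 2 ^ m - 1 := by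
      have hpm : 1 ≤ 2 ^ m := Nat.one_le_two_pow
      omega
    have key := htree c hc1 hcm
    have hbc : b = 2 * c ∨ b = 2 * c + 1 := by omega
    have hsub1 : volume (E b \ E c) = 0 := by
      refine measure_mono_null ?_ key.2
      rcases hbc with hbe | hbe <;> rw [hbe] <;> intro x hx
      · exact ⟨Or.inl hx.1, hx.2⟩
      · exact ⟨Or.inr hx.1, hx.2⟩
    have hsub2 : volume (E c \ E a) = 0 := by
      refine ih c a ha (by omega) ?_
      rw [hcdef, Nat.div_div_eq_div_mul, ← pow_succ']
      exact h
    refine measure_mono_null ?_ (measure_union_null hsub1 hsub2)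
    intro x hx
    by_cases hc : x ∈ E c
    · exact Or.inr ⟨hc, hx.2⟩
    · exact Or.inl ⟨hx.1, hc⟩

lemma sibling_split : ∀ a b : ℕ, 1 ≤ a → 1 ≤ b →
    (¬ ∃ i, b / 2 ^ i = a) → (¬ ∃ i, a / 2 ^ i = b) →
    ∃ c p q, 1 ≤ c ∧ ((p = 2*c ∧ q = 2*c+1) ∨ (p = 2*c+1 ∧ q = 2*c)) ∧
      (∃ i, a / 2 ^ i = p) ∧ (∃ j, b / 2 ^ j = q) := by
  intro a
  induction a using Nat.strong_induction_on with
  | _ a ih =>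
    intro b ha hb h1 h2
    have ha2 : 2 ≤ a := by
      rcases Nat.lt_or_ge a 2 with h | h
      · exfalso
        have : a = 1 := by omega
        subst this
        exact h1 ⟨Nat.log 2 b, div_pow_log_eq_one b hb⟩
      · exact h
    have hb2 : 2 ≤ b := by
      rcases Nat.lt_or_ge b 2 with h | h
      · exfalso
        have : b = 1 := by omega
        subst this
        exact h2 ⟨Nat.log 2 a, div_pow_log_eq_one a ha⟩
      · exact h
    by_cases hq : a / 2 = b / 2
    · have hne : a ≠ b := fun h => h1 ⟨0, by simpa using h.symm⟩
      exact ⟨a / 2, a, b, by omega, by omega, ⟨0, by simp⟩, ⟨0, by simp⟩⟩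
    · by_cases hanc : ∃ i, b / 2 ^ i = a / 2
      · obtain ⟨i, hi⟩ := hanc
        have hi1 : 1 ≤ i := by
          rcases Nat.eq_zero_or_pos i with h | h
          · exfalso
            subst h
            simp only [pow_zero, Nat.div_one] at hi
            exact h2 ⟨1, by simpa using hi.symm⟩
          · exact h
        have hq2 : (b / 2 ^ (i-1)) / 2 = a / 2 := by
          rw [Nat.div_div_eq_div_mul, ← pow_succ]
          rwa [Nat.sub_add_cancel hi1]
        have hqa : b / 2 ^ (i-1) ≠ a := fun h => h1 ⟨i-1, h⟩
        exact ⟨a / 2, a, b / 2 ^ (i-1), by omega, by omega, ⟨0, by simp⟩, ⟨i-1, rfl⟩⟩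
      · have h2' : ¬ ∃ i, (a/2) / 2 ^ i = b := by
          rintro ⟨i, hi⟩
          refine h2 ⟨i+1, ?_⟩
          rw [pow_succ', ← Nat.div_div_eq_div_mul]
          exact hi
        obtain ⟨c, p, q, hc, hpq, ⟨i, hip⟩, hj⟩ :=
          ih (a/2) (by omega) b (by omega) hb hanc h2'
        refine ⟨c, p, q, hc, hpq, ⟨i+1, ?_⟩, hj⟩
        rw [pow_succ', ← Nat.div_div_eq_div_mul]
        exact hip

/-- Let `{E_N : 1 ≤ N ≤ 2^m - 1}` be measurable subsets of `Q = [0,1]^n` of positive measure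
whose indicators form a tree system (vertex `N` has children `2N`, `2N+1`; `a` is an
ancestor-or-equal of `b` iff `b / 2^i = a` for some `i`, and the height of `N` is `log₂ N`).
Let `S` be a nonempty finite set of vertices. If all vertices of `S` lie on a common ray
(i.e. are pairwise comparable), then `⋂_{N ∈ S} E_N` agrees, up to a null set, with `E_{N'}`
for the element `N'` of `S` of maximal height, and in particular has positive measure.
Otherwise `⋂_{N ∈ S} E_N` is a null set. -/
theorem treeSystem_iInter_of_chain (n m : ℕ) (hm : 1 ≤ m)
    (E : ℕ → Set (EuclideanSpace ℝ (Fin n)))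
    (hmeas : ∀ N, 1 ≤ N → N ≤ 2 ^ m - 1 → MeasurableSet (E N))
    (hQ : ∀ N, 1 ≤ N → N ≤ 2 ^ m - 1 → E N ⊆ unitCube n)
    (hpos : ∀ N, 1 ≤ N → N ≤ 2 ^ m - 1 → 0 < volume (E N))
    (htree : ∀ N, 1 ≤ N → 2 * N + 1 ≤ 2 ^ m - 1 →
      volume (E (2 * N) ∩ E (2 * N + 1)) = 0 ∧
      volume ((E (2 * N) ∪ E (2 * N + 1)) \ E N) = 0)
    (S : Finset ℕ) (hS : S.Nonempty) (hSrange : ∀ N ∈ S, 1 ≤ N ∧ N ≤ 2 ^ m - 1) :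
    ((∀ a ∈ S, ∀ b ∈ S, (∃ i, b / 2 ^ i = a) ∨ (∃ i, a / 2 ^ i = b)) →
      ∀ N' ∈ S, (∀ N ∈ S, Nat.log 2 N ≤ Nat.log 2 N') →
        volume ((⋂ N ∈ S, E N) \ E N') = 0 ∧
        volume (E N' \ ⋂ N ∈ S, E N) = 0 ∧
        0 < volume (⋂ N ∈ S, E N)) ∧
    (¬ (∀ a ∈ S, ∀ b ∈ S, (∃ i, b / 2 ^ i = a) ∨ (∃ i, a / 2 ^ i = b)) →
      volume (⋂ N ∈ S, E N) = 0) := by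
  constructor
  · intro hcomp N' hN' hmax
    have hsub : (⋂ N ∈ S, E N) ⊆ E N' := Set.biInter_subset_of_mem hN'
    have hanc : ∀ N ∈ S, ∃ i, N' / 2 ^ i = N := by
      intro N hN
      rcases hcomp N hN N' hN' with ⟨i, hi⟩ | ⟨i, hi⟩
      · exact ⟨i, hi⟩
      · rcases Nat.eq_zero_or_pos i with h0 | h0
        · subst h0
          simp only [pow_zero, Nat.div_one] at hi
          exact ⟨0, by simp [hi]⟩
        · exfalso
          have hN1 : 1 ≤ N := (hSrange N hN).1
          have hN'1 : 1 ≤ N' := (hSrange N' hN').1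
          have hpow : (2:ℕ) ≤ 2 ^ i := by
            calc (2:ℕ) = 2 ^ 1 := rfl
              _ ≤ 2 ^ i := Nat.pow_le_pow_right (by norm_num) h0
          have hN2 : 2 ≤ N := by
            by_contra hc
            have : N / 2 ^ i = 0 := Nat.div_eq_of_lt (by omega)
            omega
          have hle : N' ≤ N / 2 := by
            rw [← hi]
            exact Nat.div_le_div_left hpow (by norm_num)
          have hl1 : Nat.log 2 N' ≤ Nat.log 2 (N / 2) := Nat.log_mono_right hle
          have hl2 : Nat.log 2 (N / 2) = Nat.log 2 N - 1 := Nat.log_div_base 2 N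
          have hl3 : 0 < Nat.log 2 N := Nat.log_pos (by norm_num) hN2
          have hl4 := hmax N hN
          omega
    have hnullN : ∀ N ∈ S, volume (E N' \ E N) = 0 := by
      intro N hN
      obtain ⟨i, hi⟩ := hanc N hN
      exact anc_sub E htree i N' N (hSrange N hN).1 (hSrange N' hN').2 hi
    have hdiff : volume (E N' \ ⋂ N ∈ S, E N) = 0 := by
      have hsub2 : E N' \ (⋂ N ∈ S, E N) ⊆ ⋃ N ∈ S, (E N' \ E N) := by
        intro x hx
        obtain ⟨hx1, hx2⟩ := hx
        simp only [Set.mem_iInter] at hx2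
        push_neg at hx2
        obtain ⟨N, hN, hxN⟩ := hx2
        exact Set.mem_biUnion hN ⟨hx1, hxN⟩
      refine measure_mono_null hsub2 ?_
      exact (measure_biUnion_null_iff S.countable_toSet).mpr fun N hN => hnullN N hN
    have hposI : 0 < volume (⋂ N ∈ S, E N) := by
      have hp := hpos N' (hSrange N' hN').1 (hSrange N' hN').2
      have hle : volume (E N') ≤
          volume (⋂ N ∈ S, E N) + volume (E N' \ ⋂ N ∈ S, E N) := by
        refine le_trans (measure_mono ?_) (measure_union_le _ _)
        intro x hx
        by_cases h : x ∈ ⋂ N ∈ S, E N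
        · exact Or.inl h
        · exact Or.inr ⟨hx, h⟩
      rw [hdiff, add_zero] at hle
      exact lt_of_lt_of_le hp hle
    refine ⟨?_, hdiff, hposI⟩
    rw [Set.diff_eq_empty.mpr hsub]
    simp
  · intro hnot
    push_neg at hnot
    obtain ⟨a, ha, b, hb, hab1, hab2⟩ := hnot
    obtain ⟨c, p, q, hc, hpq, ⟨i, hip⟩, ⟨j, hjq⟩⟩ :=
      sibling_split a b (hSrange a ha).1 (hSrange b hb).1
        (fun ⟨i, hi⟩ => hab1 i hi) (fun ⟨i, hi⟩ => hab2 i hi)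
    have hpa : p ≤ a := hip ▸ Nat.div_le_self _ _
    have hqb : q ≤ b := hjq ▸ Nat.div_le_self _ _
    have hcm : 2 * c + 1 ≤ 2 ^ m - 1 := by
      have h1 := (hSrange a ha).2
      have h2 := (hSrange b hb).2
      omega
    have hkey := (htree c hc hcm).1
    have hnp : volume (E a \ E p) = 0 :=
      anc_sub E htree i a p (by omega) (hSrange a ha).2 hip
    have hnq : volume (E b \ E q) = 0 :=
      anc_sub E htree j b q (by omega) (hSrange b hb).2 hjq
    have hpqnull : volume (E p ∩ E q) = 0 := by
      rcases hpq with ⟨hp, hq⟩ | ⟨hp, hq⟩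
      · rw [hp, hq]; exact hkey
      · rw [hp, hq, Set.inter_comm]; exact hkey
    have hsub : (⋂ N ∈ S, E N) ⊆ (E a \ E p) ∪ (E b \ E q) ∪ (E p ∩ E q) := by
      intro x hx
      have hxa : x ∈ E a := Set.biInter_subset_of_mem ha hx
      have hxb : x ∈ E b := Set.biInter_subset_of_mem hb hx
      by_cases hxp : x ∈ E p
      · by_cases hxq : x ∈ E q
        · exact Or.inr ⟨hxp, hxq⟩
        · exact Or.inl (Or.inr ⟨hxb, hxq⟩)
      · exact Or.inl (Or.inl ⟨hxa, hxp⟩)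
    exact measure_mono_null hsub
      (measure_union_null (measure_union_null hnp hnq) hpqnull)
end

section
/- Let δ > 0, let E_1, …, E_M ⊆ ℝⁿ be measurable sets, let p̄_1, …, p̄_M ∈ ℝⁿ, and let g_1, …, g_M ∈ L¹(ℝⁿ) satisfy 0 ≤ g_N ≤ 1 and ‖g_N − χ_{E_N}‖_{L¹} ≤ δ for each N. Set f_N(x) = e^{2πi p̄_N·x} g_N(x). Let 1 ≤ m_1 < … < m_r ≤ M and 1 ≤ n_1 < … < n_s ≤ M be indices with positive integer multiplicities μ_1, …, μ_r and ν_1, …, ν_s, and write p = μ_1 + … + μ_r, q = ν_1 + … + ν_s, v = Σ_{i=1}^r μ_i p̄_{m_i} − Σ_{i=1}^s ν_i p̄_{n_i}, and E = E_{m_1} ∩ … ∩ E_{m_r} ∩ E_{n_1} ∩ … ∩ E_{n_s}. Then |∫_{ℝⁿ} f_{m_1}^{μ_1} ⋯ f_{m_r}^{μ_r} · conj(f_{n_1}^{ν_1} ⋯ f_{n_s}^{ν_s}) dx − ∫_{E} e^{2πi v·x} dx| ≤ (p+q) δ. -/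
open MeasureTheory Function
open scoped RealInnerProductSpace ENNReal

lemma abs_prod_sub_prod_le {ι : Type*} (t : Finset ι) (a b : ι → ℝ)
    (ha : ∀ i ∈ t, 0 ≤ a i ∧ a i ≤ 1) (hb : ∀ i ∈ t, 0 ≤ b i ∧ b i ≤ 1) :
    |∏ i ∈ t, a i - ∏ i ∈ t, b i| ≤ ∑ i ∈ t, |a i - b i| := by
  classical
  induction t using Finset.induction_on with
  | empty => simp
  | @insert j t' hj ih =>
    rw [Finset.prod_insert hj, Finset.prod_insert hj, Finset.sum_insert hj]
    have ha' : ∀ i ∈ t', 0 ≤ a i ∧ a i ≤ 1 := fun i hi => ha i (Finset.mem_insert_of_mem hi)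
    have hb' : ∀ i ∈ t', 0 ≤ b i ∧ b i ≤ 1 := fun i hi => hb i (Finset.mem_insert_of_mem hi)
    have haj := ha j (Finset.mem_insert_self j t')
    have hB0 : 0 ≤ ∏ i ∈ t', b i := Finset.prod_nonneg fun i hi => (hb' i hi).1
    have hB1 : ∏ i ∈ t', b i ≤ 1 := Finset.prod_le_one (fun i hi => (hb' i hi).1) (fun i hi => (hb' i hi).2)
    calc |a j * ∏ i ∈ t', a i - b j * ∏ i ∈ t', b i|
        = |a j * (∏ i ∈ t', a i - ∏ i ∈ t', b i) + (a j - b j) * ∏ i ∈ t', b i| := by ring_nf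
      _ ≤ |a j * (∏ i ∈ t', a i - ∏ i ∈ t', b i)| + |(a j - b j) * ∏ i ∈ t', b i| := abs_add_le _ _
      _ = |a j| * |∏ i ∈ t', a i - ∏ i ∈ t', b i| + |a j - b j| * |∏ i ∈ t', b i| := by
          rw [abs_mul, abs_mul]
      _ ≤ 1 * (∑ i ∈ t', |a i - b i|) + |a j - b j| * 1 := by
          have h1 : |a j| ≤ 1 := abs_le.mpr ⟨by linarith [haj.1], haj.2⟩
          have h2 : |∏ i ∈ t', b i| ≤ 1 := abs_le.mpr ⟨by linarith, hB1⟩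
          have h3 := ih ha' hb'
          have h4 := mul_le_mul h1 h3 (abs_nonneg _) zero_le_one
          have h5 := mul_le_mul_of_nonneg_left h2 (abs_nonneg (a j - b j))
          linarith
      _ = |a j - b j| + ∑ i ∈ t', |a i - b i| := by ring

lemma abs_pow_sub_pow_le' (a b : ℝ) (m : ℕ) (ha : 0 ≤ a ∧ a ≤ 1) (hb : 0 ≤ b ∧ b ≤ 1) :
    |a ^ m - b ^ m| ≤ m * |a - b| := by
  have := abs_prod_sub_prod_le (Finset.range m) (fun _ => a) (fun _ => b)
    (fun i _ => ha) (fun i _ => hb)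
  simpa using this

lemma core_approx {n : ℕ} {ι : Type} [Fintype ι] (δ : ℝ) (hδ : 0 < δ)
    (S : ι → Set (EuclideanSpace ℝ (Fin n))) (hS : ∀ i, MeasurableSet (S i))
    (F : ι → EuclideanSpace ℝ (Fin n) → ℝ) (hFint : ∀ i, Integrable (F i))
    (hF01 : ∀ i x, 0 ≤ F i x ∧ F i x ≤ 1)
    (hFerr : ∀ i, eLpNorm (fun x => F i x - (S i).indicator 1 x) 1 volume ≤ ENNReal.ofReal δ)
    (κ : ι → ℕ) (hκ : ∀ i, 1 ≤ κ i)
    (e : EuclideanSpace ℝ (Fin n) → ℂ) (he : Continuous e) (he1 : ∀ x, ‖e x‖ = 1) :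
    ‖(∫ x, e x * ((∏ i, (F i x) ^ κ i : ℝ) : ℂ)) - ∫ x in ⋂ i, S i, e x‖ ≤
      (∑ i, (κ i : ℝ)) * δ := by
  classical
  set χ : ι → EuclideanSpace ℝ (Fin n) → ℝ := fun i => (S i).indicator 1 with hχdef
  have hχ01 : ∀ i x, 0 ≤ χ i x ∧ χ i x ≤ 1 := by
    intro i x
    by_cases hx : x ∈ S i <;> simp [hχdef, hx]
  have hχmeas : ∀ i, AEStronglyMeasurable (χ i) (volume : Measure (EuclideanSpace ℝ (Fin n))) :=
    fun i => ((stronglyMeasurable_const.indicator (hS i)).aestronglyMeasurable)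
  have hdint : ∀ i, Integrable (fun x => F i x - χ i x) := by
    intro i
    refine memLp_one_iff_integrable.mp ⟨(hFint i).aestronglyMeasurable.sub (hχmeas i), ?_⟩
    exact lt_of_le_of_lt (hFerr i) ENNReal.ofReal_lt_top
  have hχint : ∀ i, Integrable (χ i) := by
    intro i
    have h := (hFint i).sub (hdint i)
    exact h.congr (Filter.Eventually.of_forall fun x => by simp)
  have hderr : ∀ i, ∫ x, |F i x - χ i x| ≤ δ := by
    intro i
    have h1 : ∫ x, |F i x - χ i x| = ∫ x, ‖F i x - χ i x‖ := by simp [Real.norm_eq_abs]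
    rw [h1, integral_norm_eq_lintegral_enorm (hdint i).aestronglyMeasurable,
      ← eLpNorm_one_eq_lintegral_enorm]
    exact ENNReal.toReal_le_of_le_ofReal hδ.le (hFerr i)
  set G : EuclideanSpace ℝ (Fin n) → ℝ := fun x => ∏ i, (F i x) ^ κ i with hGdef
  set H : EuclideanSpace ℝ (Fin n) → ℝ := fun x => (⋂ i, S i).indicator 1 x with hHdef
  have hiS : MeasurableSet (⋂ i, S i) := MeasurableSet.iInter fun i => hS i
  have hHprod : ∀ x, H x = ∏ i, (χ i x) ^ κ i := by
    intro x
    by_cases hx : x ∈ ⋂ i, S i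
    · have : ∀ i, x ∈ S i := Set.mem_iInter.mp hx
      simp [hHdef, hχdef, hx, Set.indicator_of_mem, this]
    · obtain ⟨j, hj⟩ : ∃ j, x ∉ S j := by simpa [Set.mem_iInter] using hx
      show (⋂ i, S i).indicator 1 x = _
      rw [Set.indicator_of_notMem hx]
      symm
      apply Finset.prod_eq_zero (Finset.mem_univ j)
      rw [hχdef]
      simp [Set.indicator_of_notMem hj, zero_pow (Nat.one_le_iff_ne_zero.mp (hκ j))]
  have hGH : ∀ x, |G x - H x| ≤ ∑ i, (κ i : ℝ) * |F i x - χ i x| := by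
    intro x
    rw [hHprod x]
    calc |∏ i, (F i x) ^ κ i - ∏ i, (χ i x) ^ κ i|
        ≤ ∑ i, |(F i x) ^ κ i - (χ i x) ^ κ i| := by
          apply abs_prod_sub_prod_le
          · intro i _
            exact ⟨pow_nonneg (hF01 i x).1 _, pow_le_one₀ (hF01 i x).1 (hF01 i x).2⟩
          · intro i _
            exact ⟨pow_nonneg (hχ01 i x).1 _, pow_le_one₀ (hχ01 i x).1 (hχ01 i x).2⟩
      _ ≤ ∑ i, (κ i : ℝ) * |F i x - χ i x| := by
          apply Finset.sum_le_sum
          intro i _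
          exact abs_pow_sub_pow_le' _ _ _ (hF01 i x) (hχ01 i x)
  have hG01 : ∀ x, 0 ≤ G x ∧ G x ≤ 1 := by
    intro x
    exact ⟨Finset.prod_nonneg fun i _ => pow_nonneg (hF01 i x).1 _,
      Finset.prod_le_one (fun i _ => pow_nonneg (hF01 i x).1 _)
        (fun i _ => pow_le_one₀ (hF01 i x).1 (hF01 i x).2)⟩
  have hGmeas : AEStronglyMeasurable (fun x => e x * ((G x : ℝ) : ℂ))
      (volume : Measure (EuclideanSpace ℝ (Fin n))) := by
    apply he.aestronglyMeasurable.mul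
    apply Complex.continuous_ofReal.comp_aestronglyMeasurable
    apply Finset.aestronglyMeasurable_fun_prod
    intro i _
    exact ((hFint i).aestronglyMeasurable).pow _
  have hsetH : (∫ x in ⋂ i, S i, e x) = ∫ x, e x * ((H x : ℝ) : ℂ) := by
    rw [← integral_indicator hiS]
    congr 1
    funext x
    by_cases hx : x ∈ ⋂ i, S i <;> simp [hHdef, hx]
  rcases isEmpty_or_nonempty ι with hι | hι
  · have hG1 : ∀ x, G x = 1 := by intro x; simp [hGdef]
    have hH1 : ∀ x, H x = 1 := by
      intro x; simp [hHdef, Set.iInter_of_empty]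
    rw [hsetH]
    have : (fun x => e x * ((G x : ℝ) : ℂ)) = fun x => e x * ((H x : ℝ) : ℂ) := by
      funext x; rw [hG1, hH1]
    rw [this, sub_self, norm_zero]
    positivity
  · obtain ⟨j⟩ := hι
    -- integrability of the two integrands
    have hGle : ∀ x, G x ≤ F j x := by
      intro x
      calc G x ≤ (F j x) ^ κ j := by
            rw [hGdef]
            have h := Finset.mul_prod_erase Finset.univ (fun i => (F i x) ^ κ i)
              (Finset.mem_univ j)
            calc ∏ i, (F i x) ^ κ i
                = (F j x) ^ κ j * ∏ i ∈ Finset.univ.erase j, (F i x) ^ κ i := h.symm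
              _ ≤ (F j x) ^ κ j * 1 := by
                  apply mul_le_mul_of_nonneg_left _ (pow_nonneg (hF01 j x).1 _)
                  exact Finset.prod_le_one (fun i _ => pow_nonneg (hF01 i x).1 _)
                    (fun i _ => pow_le_one₀ (hF01 i x).1 (hF01 i x).2)
              _ = (F j x) ^ κ j := mul_one _
        _ ≤ (F j x) ^ 1 := pow_le_pow_of_le_one (hF01 j x).1 (hF01 j x).2 (hκ j)
        _ = F j x := pow_one _
    have hGint : Integrable (fun x => e x * ((G x : ℝ) : ℂ)) := by
      apply Integrable.mono' (hFint j) hGmeas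
      filter_upwards with x
      rw [norm_mul, he1 x, one_mul, Complex.norm_real, Real.norm_eq_abs,
        abs_of_nonneg (hG01 x).1]
      exact hGle x
    have hHle : ∀ x, H x ≤ χ j x := by
      intro x
      by_cases hx : x ∈ ⋂ i, S i
      · have : x ∈ S j := Set.mem_iInter.mp hx j
        simp [hHdef, hχdef, hx, this]
      · simp [hHdef, Set.indicator_of_notMem hx, (hχ01 j x).1]
    have hH01 : ∀ x, 0 ≤ H x ∧ H x ≤ 1 := by
      intro x
      by_cases hx : x ∈ ⋂ i, S i <;> simp [hHdef, hx]
    have hHmeas : AEStronglyMeasurable (fun x => e x * ((H x : ℝ) : ℂ))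
        (volume : Measure (EuclideanSpace ℝ (Fin n))) := by
      apply he.aestronglyMeasurable.mul
      exact Complex.continuous_ofReal.comp_aestronglyMeasurable
        ((stronglyMeasurable_const.indicator hiS).aestronglyMeasurable)
    have hHint : Integrable (fun x => e x * ((H x : ℝ) : ℂ)) := by
      apply Integrable.mono' (hχint j) hHmeas
      filter_upwards with x
      rw [norm_mul, he1 x, one_mul, Complex.norm_real, Real.norm_eq_abs,
        abs_of_nonneg (hH01 x).1]
      exact hHle x
    rw [hsetH, ← integral_sub hGint hHint]
    have hinteq : ∀ x, e x * ((G x : ℝ) : ℂ) - e x * ((H x : ℝ) : ℂ)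
        = e x * (((G x - H x : ℝ)) : ℂ) := by
      intro x; push_cast; ring
    calc ‖∫ x, (e x * ((G x : ℝ) : ℂ) - e x * ((H x : ℝ) : ℂ))‖
        ≤ ∫ x, ‖e x * ((G x : ℝ) : ℂ) - e x * ((H x : ℝ) : ℂ)‖ :=
          norm_integral_le_integral_norm _
      _ = ∫ x, |G x - H x| := by
          congr 1; funext x
          rw [hinteq x, norm_mul, he1 x, one_mul, Complex.norm_real, Real.norm_eq_abs]
      _ ≤ ∫ x, ∑ i, (κ i : ℝ) * |F i x - χ i x| := by
          apply integral_mono _ _ hGH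
          · have : Integrable (fun x => ‖e x * ((G x : ℝ) : ℂ) - e x * ((H x : ℝ) : ℂ)‖) :=
              (hGint.sub hHint).norm
            apply this.congr
            filter_upwards with x
            rw [hinteq x, norm_mul, he1 x, one_mul, Complex.norm_real, Real.norm_eq_abs]
          · apply integrable_finset_sum
            intro i _
            exact ((hdint i).abs).const_mul _
      _ = ∑ i, (κ i : ℝ) * ∫ x, |F i x - χ i x| := by
          rw [integral_finset_sum]
          · congr 1; funext i
            exact MeasureTheory.integral_const_mul _ _
          · intro i _
            exact ((hdint i).abs).const_mul _
      _ ≤ ∑ i, (κ i : ℝ) * δ := by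
          apply Finset.sum_le_sum
          intro i _
          exact mul_le_mul_of_nonneg_left (hderr i) (Nat.cast_nonneg _)
      _ = (∑ i, (κ i : ℝ)) * δ := by rw [← Finset.sum_mul]

/-- If `0 ≤ g_N ≤ 1`, `‖g_N - χ_{E_N}‖₁ ≤ δ`, and `f_N(x) = e^{2πi p̄_N·x} g_N(x)`, then the
integral of `f_{m_1}^{μ_1} ⋯ f_{m_r}^{μ_r} conj(f_{n_1}^{ν_1} ⋯ f_{n_s}^{ν_s})` differs from
`∫_E e^{2πi v·x} dx` by at most `(p+q) δ`, where `p = Σ μ_i`, `q = Σ ν_i`,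
`v = Σ μ_i p̄_{m_i} - Σ ν_i p̄_{n_i}` and `E = E_{m_1} ∩ ⋯ ∩ E_{m_r} ∩ E_{n_1} ∩ ⋯ ∩ E_{n_s}`. -/
theorem integral_product_approx (n M : ℕ) (δ : ℝ) (hδ : 0 < δ)
    (E : Fin M → Set (EuclideanSpace ℝ (Fin n)))
    (hEmeas : ∀ N, MeasurableSet (E N))
    (pbar : Fin M → EuclideanSpace ℝ (Fin n))
    (g : Fin M → EuclideanSpace ℝ (Fin n) → ℝ)
    (hgint : ∀ N, Integrable (g N))
    (hg01 : ∀ N x, 0 ≤ g N x ∧ g N x ≤ 1)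
    (hgerr : ∀ N, eLpNorm (fun x => g N x - (E N).indicator 1 x) 1 volume ≤ ENNReal.ofReal δ)
    (r s : ℕ) (mi : Fin r → Fin M) (ni : Fin s → Fin M)
    (hmi : StrictMono mi) (hni : StrictMono ni)
    (μ : Fin r → ℕ) (ν : Fin s → ℕ) (hμ : ∀ i, 1 ≤ μ i) (hν : ∀ i, 1 ≤ ν i) :
    ‖
      ((∫ x, (∏ i, (Complex.exp (2 * Real.pi * Complex.I * (⟪x, pbar (mi i)⟫ : ℝ)) *
              (g (mi i) x : ℂ)) ^ (μ i)) *
          (starRingEnd ℂ) (∏ i, (Complex.exp (2 * Real.pi * Complex.I *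
              (⟪x, pbar (ni i)⟫ : ℝ)) * (g (ni i) x : ℂ)) ^ (ν i))) -
        ∫ x in (⋂ i, E (mi i)) ∩ ⋂ i, E (ni i),
          Complex.exp (2 * Real.pi * Complex.I *
            ((⟪x, (∑ i, (μ i : ℝ) • pbar (mi i)) - ∑ i, (ν i : ℝ) • pbar (ni i)⟫ : ℝ))))‖ ≤
      ((∑ i, μ i : ℕ) + (∑ i, ν i : ℕ)) * δ := by
    classical
  set c : ℂ := 2 * (Real.pi : ℂ) * Complex.I with hc
  set v : EuclideanSpace ℝ (Fin n) :=
    (∑ i, (μ i : ℝ) • pbar (mi i)) - ∑ i, (ν i : ℝ) • pbar (ni i) with hvdef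
  set Nf : Fin r ⊕ Fin s → Fin M := Sum.elim mi ni with hNf
  set κ : Fin r ⊕ Fin s → ℕ := Sum.elim μ ν with hκf
  have hv : ∀ x : EuclideanSpace ℝ (Fin n),
      (⟪x, v⟫ : ℝ) = (∑ i, (μ i : ℝ) * ⟪x, pbar (mi i)⟫) -
        ∑ i, (ν i : ℝ) * ⟪x, pbar (ni i)⟫ := by
    intro x
    rw [hvdef, inner_sub_right, inner_sum, inner_sum]
    congr 1 <;> exact Finset.sum_congr rfl fun i _ => real_inner_smul_right _ _ _
  have hprod : ∀ (x : EuclideanSpace ℝ (Fin n)) (k : ℕ) (idx : Fin k → Fin M)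
      (mm : Fin k → ℕ),
      ∏ i, (Complex.exp (c * (⟪x, pbar (idx i)⟫ : ℝ)) * (g (idx i) x : ℂ)) ^ mm i
      = Complex.exp (c * ((∑ i, (mm i : ℝ) * ⟪x, pbar (idx i)⟫ : ℝ) : ℂ)) *
        ((∏ i, (g (idx i) x) ^ mm i : ℝ) : ℂ) := by
    intro x k idx mm
    simp only [mul_pow, Finset.prod_mul_distrib, ← Complex.exp_nat_mul, ← Complex.exp_sum]
    congr 1
    · congr 1
      push_cast
      rw [Finset.mul_sum]
      exact Finset.sum_congr rfl fun i _ => by ring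
    · push_cast
      rfl
  have hκ1 : ∀ i, 1 ≤ κ i := by
    intro i
    cases i with
    | inl i => exact hμ i
    | inr i => exact hν i
  set e : EuclideanSpace ℝ (Fin n) → ℂ := fun x => Complex.exp (c * (⟪x, v⟫ : ℝ)) with he
  have he_cont : Continuous e := by
    apply Complex.continuous_exp.comp
    exact continuous_const.mul (Complex.continuous_ofReal.comp
      (continuous_id.inner continuous_const))
  have he1 : ∀ x, ‖e x‖ = 1 := by
    intro x
    rw [he, Complex.norm_exp]
    have : (c * ((⟪x, v⟫ : ℝ) : ℂ)).re = 0 := by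
      rw [hc]
      simp [Complex.mul_re, Complex.mul_im]
    rw [this, Real.exp_zero]
  have key : ∀ x : EuclideanSpace ℝ (Fin n),
      (∏ i, (Complex.exp (c * (⟪x, pbar (mi i)⟫ : ℝ)) * (g (mi i) x : ℂ)) ^ μ i) *
        (starRingEnd ℂ) (∏ i, (Complex.exp (c * (⟪x, pbar (ni i)⟫ : ℝ)) *
          (g (ni i) x : ℂ)) ^ ν i)
      = e x * ((∏ i, (g (Nf i) x) ^ κ i : ℝ) : ℂ) := by
    intro x
    rw [hprod x r mi μ, hprod x s ni ν, map_mul, ← Complex.exp_conj]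
    have hconj1 : (starRingEnd ℂ) (c * ((∑ i, (ν i : ℝ) * ⟪x, pbar (ni i)⟫ : ℝ) : ℂ))
        = -(c * ((∑ i, (ν i : ℝ) * ⟪x, pbar (ni i)⟫ : ℝ) : ℂ)) := by
      rw [hc]
      simp only [map_mul, Complex.conj_ofReal, Complex.conj_I, map_ofNat]
      ring
    have hconj2 : (starRingEnd ℂ) (((∏ i, (g (ni i) x) ^ ν i : ℝ)) : ℂ)
        = ((∏ i, (g (ni i) x) ^ ν i : ℝ) : ℂ) := Complex.conj_ofReal _
    rw [hconj1, hconj2]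
    rw [he]
    rw [show ∀ (A B : ℂ) (P Q : ℂ), Complex.exp A * P * (Complex.exp (-B) * Q)
        = Complex.exp (A - B) * (P * Q) by
      intro A B P Q
      rw [sub_eq_add_neg, Complex.exp_add]; ring]
    congr 1
    · congr 1
      rw [hv x]
      push_cast
      ring
    · rw [hNf, hκf, Fintype.prod_sum_type]
      push_cast
      rfl
  have hset : (⋂ i, E (mi i)) ∩ ⋂ i, E (ni i) = ⋂ i, E (Nf i) := by
    rw [hNf, Set.iInter_sum]
    simp
  have hsum : (((∑ i, μ i : ℕ) + (∑ i, ν i : ℕ) : ℕ) : ℝ) = ∑ i, (κ i : ℝ) := by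
    rw [hκf, Fintype.sum_sum_type]
    push_cast
    simp
  have hgoal1 : (∫ x, (∏ i, (Complex.exp (2 * Real.pi * Complex.I *
        (⟪x, pbar (mi i)⟫ : ℝ)) * (g (mi i) x : ℂ)) ^ (μ i)) *
      (starRingEnd ℂ) (∏ i, (Complex.exp (2 * Real.pi * Complex.I *
        (⟪x, pbar (ni i)⟫ : ℝ)) * (g (ni i) x : ℂ)) ^ (ν i)))
      = ∫ x, e x * ((∏ i, (g (Nf i) x) ^ κ i : ℝ) : ℂ) := by
    congr 1
    funext x
    exact key x
  have hgoal2 : (∫ x in (⋂ i, E (mi i)) ∩ ⋂ i, E (ni i),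
      Complex.exp (2 * Real.pi * Complex.I * ((⟪x, v⟫ : ℝ))))
      = ∫ x in ⋂ i, E (Nf i), e x := by
    rw [hset]
  rw [hgoal1, hgoal2]
  calc ‖(∫ x, e x * ((∏ i, (g (Nf i) x) ^ κ i : ℝ) : ℂ)) - ∫ x in ⋂ i, E (Nf i), e x‖
      ≤ (∑ i, (κ i : ℝ)) * δ := by
        apply core_approx δ hδ (fun i => E (Nf i)) (fun i => hEmeas _)
          (fun i => g (Nf i)) (fun i => hgint _) (fun i x => hg01 _ x)
          (fun i => hgerr _) κ hκ1 e he_cont he1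
    _ = (((∑ i, μ i : ℕ) + (∑ i, ν i : ℕ) : ℕ) : ℝ) * δ := by rw [hsum]
    _ = ((∑ i, μ i : ℕ) + (∑ i, ν i : ℕ)) * δ := by push_cast; ring
end
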